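/- Assume that for every x ∈ X and u ∈ U, sup_{w ∈ W} l(x, u, w) ≥ 0, and that for every y ∈ Y the preimage h^{-1}{y} is a finite indexed set of at most M elements. Suppose the value-iteration sequence is bounded with limit V_⋆, and suppose that for every r and y the infimum over u ∈ U in the Bellman operator applied to V_⋆ is attained. Let η_⋆(r, y) be a minimizing argument, so that B_{η_⋆(r,y)} V_⋆(r, y) = V_⋆(r, y). Then the information-state feedback policy μ_t(y_{0:t}, u_{0:t-1}) = η_⋆(r_t, y_t), where r_0 = 0 and r_{t+1} = g(r_t, y_{t+1}, y_t, u_t), achieves sup_N J_π^N(y_0) = J_⋆(y_0) for every y_0 ∈ Y, i.e., it is optimal for the minimax problem. -/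

import Mathlib

open scoped BigOperators

noncomputable section

variable {X U W Y : Type*}

/-- The worst-case history `ρ_t(x, y_{0:t-1}, u_{0:t-1})`: the supremum (in `ℝ ∪ {-∞}`,
with `sSup ∅ = ⊥`) of accumulated stage costs over all disturbance sequences and initial
states whose trajectory reaches `x` at time `t` and is consistent with the measurements. -/
noncomputable def rho (f : X → U → W → X) (h : X → Y) (l : X → U → W → ℝ)
    (t : ℕ) (x : X) (ys : ℕ → Y) (us : ℕ → U) : EReal :=
  sSup { c : EReal | ∃ (xs : ℕ → X) (ws : ℕ → W),
    xs t = x ∧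
    (∀ τ < t, xs (τ + 1) = f (xs τ) (us τ) (ws τ)) ∧
    (∀ τ < t, h (xs τ) = ys τ) ∧
    c = ((∑ τ ∈ Finset.range t, l (xs τ) (us τ) (ws τ) : ℝ) : EReal) }

/-- Inputs generated causally by a strategy `π` from a measurement sequence:
`u_t = μ_t(y_{0:t}, u_{0:t-1})`. -/
noncomputable def inputsOf (π : ℕ → List Y → List U → U) (ys : ℕ → Y) : ℕ → U
  | t => π t ((List.range (t + 1)).map ys) (List.ofFn fun i : Fin t => inputsOf π ys i)
  decreasing_by exact i.isLt

/-- Closed loop: state, list of past measurements and list of past inputs. -/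
noncomputable def loop (f : X → U → W → X) (h : X → Y)
    (π : ℕ → List Y → List U → U) (x0 : X) (ws : ℕ → W) : ℕ → X × List Y × List U
  | 0 => (x0, [h x0], [])
  | t + 1 =>
    let p := loop f h π x0 ws t
    let u := π t p.2.1 p.2.2
    let x' := f p.1 u (ws t)
    (x', p.2.1 ++ [h x'], p.2.2 ++ [u])

/-- Closed-loop state `x_t`. -/
noncomputable def cstate (f : X → U → W → X) (h : X → Y)
    (π : ℕ → List Y → List U → U) (x0 : X) (ws : ℕ → W) (t : ℕ) : X :=
  (loop f h π x0 ws t).1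

/-- Closed-loop input `u_t = μ_t(y_{0:t}, u_{0:t-1})`. -/
noncomputable def cinput (f : X → U → W → X) (h : X → Y)
    (π : ℕ → List Y → List U → U) (x0 : X) (ws : ℕ → W) (t : ℕ) : U :=
  π t (loop f h π x0 ws t).2.1 (loop f h π x0 ws t).2.2

/-- The worst-case `N`-horizon performance `J_π^N(y_0)`. -/
noncomputable def Jcost (f : X → U → W → X) (h : X → Y) (l : X → U → W → ℝ)
    (π : ℕ → List Y → List U → U) (N : ℕ) (y0 : Y) : EReal :=
  sSup { c : EReal | ∃ (x0 : X) (ws : ℕ → W), h x0 = y0 ∧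
    c = ((∑ t ∈ Finset.range (N + 1),
      l (cstate f h π x0 ws t) (cinput f h π x0 ws t) (ws t) : ℝ) : EReal) }

/-- The information-state update `g` (componentwise), for preimages of `h`
enumerated by `ξ : Y → Fin M → X`. -/
noncomputable def gup {M : ℕ} (f : X → U → W → X) (l : X → U → W → ℝ)
    (ξ : Y → Fin M → X) (r : Fin M → EReal) (ynext y : Y) (u : U) : Fin M → EReal :=
  fun i => sSup { c : EReal | ∃ (j : Fin M) (w : W),
    ξ ynext i = f (ξ y j) u w ∧ c = (l (ξ y j) u w : EReal) + r j }

/-- The information state `r_t`, defined recursively by `r_0 = 0` and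
`r_t = g(r_{t-1}, y_t, y_{t-1}, u_{t-1})`. -/
noncomputable def rvec {M : ℕ} (f : X → U → W → X) (l : X → U → W → ℝ)
    (ξ : Y → Fin M → X) (ys : ℕ → Y) (us : ℕ → U) : ℕ → Fin M → EReal
  | 0 => 0
  | t + 1 => gup f l ξ (rvec f l ξ ys us t) (ys (t + 1)) (ys t) (us t)

/-- The Bellman operator `B_u V(r, y) = sup_{v ∈ Y} V(g(r, v, y, u), v)`. -/
noncomputable def Bu {M : ℕ} (f : X → U → W → X) (l : X → U → W → ℝ)
    (ξ : Y → Fin M → X) (V : (Fin M → EReal) → Y → EReal) (u : U)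
    (r : Fin M → EReal) (y : Y) : EReal :=
  ⨆ v : Y, V (gup f l ξ r v y u) v

/-- The Bellman operator `B V(r, y) = inf_{u ∈ U} B_u V(r, y)`. -/
noncomputable def Bop {M : ℕ} (f : X → U → W → X) (l : X → U → W → ℝ)
    (ξ : Y → Fin M → X) (V : (Fin M → EReal) → Y → EReal)
    (r : Fin M → EReal) (y : Y) : EReal :=
  ⨅ u : U, Bu f l ξ V u r y

/-- The value iteration `V_0(r, y) = max_i r^i`, `V_{k+1} = B V_k`. -/
noncomputable def Vseq {M : ℕ} (f : X → U → W → X) (l : X → U → W → ℝ)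
    (ξ : Y → Fin M → X) : ℕ → (Fin M → EReal) → Y → EReal
  | 0 => fun r _ => ⨆ i, r i
  | k + 1 => fun r y => Bop f l ξ (Vseq f l ξ k) r y

/-- The (possibly time-varying) information-state feedback policy
`μ_t(y_{0:t}, u_{0:t-1}) = η_t(r_t, y_t)`, where `r_0 = 0` and
`r_{t+1} = g(r_t, y_{t+1}, y_t, u_t)`. -/
noncomputable def infoStrategyT {M : ℕ} [Nonempty Y] [Nonempty U]
    (f : X → U → W → X) (l : X → U → W → ℝ) (ξ : Y → Fin M → X)
    (η : ℕ → (Fin M → EReal) → Y → U) : ℕ → List Y → List U → U :=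
  fun t ysl usl =>
    η t (rvec f l ξ (fun τ => ysl.getD τ (Classical.arbitrary Y))
          (fun τ => usl.getD τ (Classical.arbitrary U)) (ysl.length - 1))
      (ysl.getD (ysl.length - 1) (Classical.arbitrary Y))

/-- Stationary information-state feedback policy `μ_t(y_{0:t}, u_{0:t-1}) = η(r_t, y_t)`. -/
noncomputable def infoStrategy {M : ℕ} [Nonempty Y] [Nonempty U]
    (f : X → U → W → X) (l : X → U → W → ℝ) (ξ : Y → Fin M → X)
    (η : (Fin M → EReal) → Y → U) : ℕ → List Y → List U → U :=
  infoStrategyT f l ξ (fun _ => η)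

end
section AuxLemmas

variable {X U W Y : Type*}

lemma ereal_add_sSup (s : ℝ) (A : Set EReal) :
    sSup ((fun x => (s : EReal) + x) '' A) = (s : EReal) + sSup A := by
  apply le_antisymm
  · refine sSup_le ?_
    rintro _ ⟨x, hx, rfl⟩
    exact add_le_add_right (le_sSup hx) _
  · rcases A.eq_empty_or_nonempty with rfl | hA
    · simp [EReal.add_bot]
    · have h1 : sSup A ≤ sSup ((fun x => (s : EReal) + x) '' A) - s := by
        refine sSup_le fun x hx => ?_
        rw [EReal.le_sub_iff_add_le (Or.inl (EReal.coe_ne_bot s)) (Or.inl (EReal.coe_ne_top s))]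
        rw [add_comm]
        exact le_sSup ⟨x, hx, rfl⟩
      calc (s : EReal) + sSup A ≤ s + (sSup ((fun x => (s : EReal) + x) '' A) - s) :=
            add_le_add_right h1 _
        _ = sSup ((fun x => (s : EReal) + x) '' A) := by
            rw [add_comm, EReal.sub_add_cancel]

lemma cstate_zero (f : X → U → W → X) (h : X → Y) (π : ℕ → List Y → List U → U)
    (x0 : X) (ws : ℕ → W) : cstate f h π x0 ws 0 = x0 := rfl

lemma cstate_succ (f : X → U → W → X) (h : X → Y) (π : ℕ → List Y → List U → U)
    (x0 : X) (ws : ℕ → W) (t : ℕ) :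
    cstate f h π x0 ws (t + 1)
      = f (cstate f h π x0 ws t) (cinput f h π x0 ws t) (ws t) := rfl

lemma loop_lists (f : X → U → W → X) (h : X → Y) (π : ℕ → List Y → List U → U)
    (x0 : X) (ws : ℕ → W) (t : ℕ) :
    (loop f h π x0 ws t).2.1
        = (List.range (t + 1)).map (fun τ => h (cstate f h π x0 ws τ))
      ∧ (loop f h π x0 ws t).2.2 = (List.range t).map (cinput f h π x0 ws) := by
  induction t with
  | zero => refine ⟨?_, ?_⟩ <;> simp [loop, cstate, List.range_succ]
  | succ t ih =>
    constructor
    · show (loop f h π x0 ws t).2.1 ++ [h (cstate f h π x0 ws (t+1))] = _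
      rw [ih.1, List.range_succ (n := t + 1), List.map_append]
      simp
    · show (loop f h π x0 ws t).2.2 ++ [cinput f h π x0 ws t] = _
      rw [ih.2, List.range_succ (n := t), List.map_append]
      simp

lemma getD_map_range {α : Type*} (g : ℕ → α) (n τ : ℕ) (d : α) :
    ((List.range n).map g).getD τ d = if τ < n then g τ else d := by
  split_ifs with hτ
  · rw [List.getD_eq_getElem?_getD]
    rw [List.getElem?_map, List.getElem?_range hτ]
    rfl
  · apply List.getD_eq_default
    simpa using Nat.le_of_not_lt hτ

lemma rvec_congr {M : ℕ} (f : X → U → W → X) (l : X → U → W → ℝ) (ξ : Y → Fin M → X)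
    {ys1 ys2 : ℕ → Y} {us1 us2 : ℕ → U} (t : ℕ)
    (hy : ∀ τ ≤ t, ys1 τ = ys2 τ) (hu : ∀ τ < t, us1 τ = us2 τ) :
    rvec f l ξ ys1 us1 t = rvec f l ξ ys2 us2 t := by
  induction t with
  | zero => rfl
  | succ t ih =>
    show gup f l ξ (rvec f l ξ ys1 us1 t) (ys1 (t+1)) (ys1 t) (us1 t) = _
    rw [ih (fun τ hτ => hy τ (hτ.trans (Nat.le_succ t))) (fun τ hτ => hu τ (hτ.trans (Nat.lt_succ_self t))),
      hy (t+1) le_rfl, hy t (Nat.le_succ t), hu t (Nat.lt_succ_self t)]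
    rfl

end AuxLemmas
section AuxLemmas2

variable {X U W Y : Type*}

lemma cinput_infoStrategy {M : ℕ} [Nonempty Y] [Nonempty U]
    (f : X → U → W → X) (h : X → Y) (l : X → U → W → ℝ) (ξ : Y → Fin M → X)
    (η : (Fin M → EReal) → Y → U) (x0 : X) (ws : ℕ → W) (t : ℕ) :
    cinput f h (infoStrategy f l ξ η) x0 ws t
      = η (rvec f l ξ (fun τ => h (cstate f h (infoStrategy f l ξ η) x0 ws τ))
            (cinput f h (infoStrategy f l ξ η) x0 ws) t)
          (h (cstate f h (infoStrategy f l ξ η) x0 ws t)) := by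
  set π := infoStrategy f l ξ η with hπ
  have hl := loop_lists f h π x0 ws t
  show π t (loop f h π x0 ws t).2.1 (loop f h π x0 ws t).2.2 = _
  rw [hl.1, hl.2, hπ]
  simp only [infoStrategy, infoStrategyT, List.length_map, List.length_range,
    Nat.add_sub_cancel]
  congr 1
  · refine rvec_congr f l ξ t ?_ ?_
    · intro τ hτ
      rw [getD_map_range, if_pos (Nat.lt_succ_of_le hτ)]
    · intro τ hτ
      rw [getD_map_range, if_pos hτ]
  · rw [getD_map_range, if_pos (Nat.lt_succ_self t)]

lemma h_xi {M : ℕ} {h : X → Y} {ξ : Y → Fin M → X}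
    (hξ : ∀ y : Y, Set.range (ξ y) = {x : X | h x = y}) (y : Y) (i : Fin M) :
    h (ξ y i) = y := by
  have : ξ y i ∈ Set.range (ξ y) := Set.mem_range_self i
  rw [hξ y] at this
  exact this

lemma exists_xi {M : ℕ} {h : X → Y} {ξ : Y → Fin M → X}
    (hξ : ∀ y : Y, Set.range (ξ y) = {x : X | h x = y}) {x : X} {y : Y}
    (hx : h x = y) : ∃ i : Fin M, ξ y i = x := by
  have : x ∈ Set.range (ξ y) := by rw [hξ y]; exact hx
  exact this

lemma rvec_eq_rho {M : ℕ} [Nonempty W]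
    (f : X → U → W → X) (h : X → Y) (l : X → U → W → ℝ) (ξ : Y → Fin M → X)
    (hξ : ∀ y : Y, Set.range (ξ y) = {x : X | h x = y})
    (ys : ℕ → Y) (us : ℕ → U) :
    ∀ (t : ℕ) (i : Fin M), rvec f l ξ ys us t i = rho f h l t (ξ (ys t) i) ys us := by
  intro t
  induction t with
  | zero =>
    intro i
    show (0 : EReal) = _
    rw [rho]
    apply le_antisymm
    · refine le_sSup ⟨fun _ => ξ (ys 0) i, fun _ => Classical.arbitrary W, rfl,
        fun τ hτ => absurd hτ (Nat.not_lt_zero τ), fun τ hτ => absurd hτ (Nat.not_lt_zero τ), ?_⟩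
      simp
    · refine sSup_le ?_
      rintro c ⟨xs, ws, -, -, -, rfl⟩
      simp
  | succ t ih =>
    intro i
    show gup f l ξ (rvec f l ξ ys us t) (ys (t+1)) (ys t) (us t) i = _
    rw [gup, rho]
    apply le_antisymm
    · refine sSup_le ?_
      rintro c ⟨j, w, hfw, rfl⟩
      rw [ih j, rho, ← ereal_add_sSup]
      refine sSup_le ?_
      rintro _ ⟨c', ⟨xs, ws', h0, hdyn, hmeas, rfl⟩, rfl⟩
      refine le_sSup ⟨fun τ => if τ = t+1 then ξ (ys (t+1)) i else xs τ,
        Function.update ws' t w, ?_, ?_, ?_, ?_⟩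
      · simp
      · intro τ hτ
        rcases Nat.lt_succ_iff_lt_or_eq.1 hτ with hτ' | rfl
        · have h1 : τ + 1 ≠ t + 1 := by omega
          have h2 : τ ≠ t + 1 := by omega
          have h3 : τ ≠ t := by omega
          simp only [h1, h2, if_false, Function.update_of_ne h3]
          exact hdyn τ hτ'
        · have h2 : τ ≠ τ + 1 := by omega
          simp only [if_pos rfl, h2, if_false, Function.update_self]
          simp [hfw, h0]
      · intro τ hτ
        rcases Nat.lt_succ_iff_lt_or_eq.1 hτ with hτ' | rfl
        · have h2 : τ ≠ t + 1 := by omega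
          simp only [h2, if_false]
          exact hmeas τ hτ'
        · have h2 : τ ≠ τ + 1 := by omega
          simp only [h2, if_false]
          rw [h0, h_xi hξ]
      · have hsum : ∀ τ ∈ Finset.range t,
            l (if τ = t+1 then ξ (ys (t+1)) i else xs τ) (us τ) (Function.update ws' t w τ)
              = l (xs τ) (us τ) (ws' τ) := by
          intro τ hτ
          have hτ' : τ < t := Finset.mem_range.1 hτ
          have h2 : τ ≠ t + 1 := by omega
          have h3 : τ ≠ t := by omega
          simp [h2, h3, Function.update_of_ne h3]
        rw [Finset.sum_range_succ, Finset.sum_congr rfl hsum]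
        have h2 : t ≠ t + 1 := by omega
        simp only [h2, if_false, Function.update_self, h0]
        rw [EReal.coe_add, add_comm]
    · refine sSup_le ?_
      rintro c ⟨xs, ws', hend, hdyn, hmeas, rfl⟩
      obtain ⟨j, hj⟩ := exists_xi hξ (hmeas t (Nat.lt_succ_self t))
      have hmem : (↑(l (ξ (ys t) j) (us t) (ws' t)) + rvec f l ξ ys us t j : EReal)
          ∈ { c : EReal | ∃ (j' : Fin M) (w : W),
              ξ (ys (t+1)) i = f (ξ (ys t) j') (us t) w
                ∧ c = (l (ξ (ys t) j') (us t) w : EReal) + rvec f l ξ ys us t j' } := by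
        exact ⟨j, ws' t, by rw [hj, ← hdyn t (Nat.lt_succ_self t), hend], rfl⟩
      refine le_trans ?_ (le_sSup hmem)
      have hle : ((∑ τ ∈ Finset.range t, l (xs τ) (us τ) (ws' τ) : ℝ) : EReal)
          ≤ rvec f l ξ ys us t j := by
        rw [ih j, rho]
        refine le_sSup ⟨xs, ws', hj.symm ▸ rfl, fun τ hτ => hdyn τ (hτ.trans (Nat.lt_succ_self t)),
          fun τ hτ => hmeas τ (hτ.trans (Nat.lt_succ_self t)), rfl⟩
      calc ((∑ τ ∈ Finset.range (t+1), l (xs τ) (us τ) (ws' τ) : ℝ) : EReal)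
          = ↑(l (xs t) (us t) (ws' t)) + ↑(∑ τ ∈ Finset.range t, l (xs τ) (us τ) (ws' τ) : ℝ) := by
            rw [Finset.sum_range_succ, EReal.coe_add, add_comm]
        _ ≤ ↑(l (xs t) (us t) (ws' t)) + rvec f l ξ ys us t j := add_le_add_right hle _
        _ = ↑(l (ξ (ys t) j) (us t) (ws' t)) + rvec f l ξ ys us t j := by rw [hj]

end AuxLemmas2
section AuxLemmas3

variable {X U W Y : Type*}

lemma loop_match (f : X → U → W → X) (h : X → Y) (π : ℕ → List Y → List U → U)
    (x0 x0' : X) (ws ws' : ℕ → W) (T : ℕ) (xs' : ℕ → X)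
    (h0 : xs' 0 = x0')
    (hdyn : ∀ τ < T, xs' (τ + 1) = f (xs' τ) (cinput f h π x0 ws τ) (ws' τ))
    (hmeas : ∀ τ < T, h (xs' τ) = h (cstate f h π x0 ws τ)) :
    (∀ τ ≤ T, cstate f h π x0' ws' τ = xs' τ)
      ∧ (∀ τ < T, cinput f h π x0' ws' τ = cinput f h π x0 ws τ) := by
  have key : ∀ τ, (τ ≤ T → cstate f h π x0' ws' τ = xs' τ)
      ∧ (τ < T → cinput f h π x0' ws' τ = cinput f h π x0 ws τ) := by
    intro τ
    induction τ using Nat.strong_induction_on with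
    | _ τ IH =>
      have hstate : τ ≤ T → cstate f h π x0' ws' τ = xs' τ := by
        intro hτ
        cases τ with
        | zero => rw [cstate_zero, h0]
        | succ σ =>
          have hσT : σ < T := Nat.lt_of_succ_le hτ
          rw [cstate_succ, (IH σ (Nat.lt_succ_self σ)).1 (le_of_lt hσT),
            (IH σ (Nat.lt_succ_self σ)).2 hσT, hdyn σ hσT]
      refine ⟨hstate, ?_⟩
      intro hτ
      have hsteq : ∀ σ < τ + 1, cstate f h π x0' ws' σ = xs' σ := by
        intro σ hσ
        rcases Nat.lt_succ_iff_lt_or_eq.1 hσ with hσ' | rfl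
        · exact (IH σ hσ').1 (le_of_lt (hσ'.trans hτ))
        · exact hstate (le_of_lt hτ)
      show π τ (loop f h π x0' ws' τ).2.1 (loop f h π x0' ws' τ).2.2
        = π τ (loop f h π x0 ws τ).2.1 (loop f h π x0 ws τ).2.2
      have l1 := loop_lists f h π x0' ws' τ
      have l2 := loop_lists f h π x0 ws τ
      rw [l1.1, l1.2, l2.1, l2.2]
      have e1 : (List.range (τ + 1)).map (fun σ => h (cstate f h π x0' ws' σ))
          = (List.range (τ + 1)).map (fun σ => h (cstate f h π x0 ws σ)) := by
        refine List.map_congr_left ?_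
        intro σ hσ
        have hσ' : σ < τ + 1 := List.mem_range.1 hσ
        rw [hsteq σ hσ', hmeas σ (by omega)]
      have e2 : (List.range τ).map (cinput f h π x0' ws')
          = (List.range τ).map (cinput f h π x0 ws) := by
        refine List.map_congr_left ?_
        intro σ hσ
        have hσ' : σ < τ := List.mem_range.1 hσ
        exact (IH σ hσ').2 (hσ'.trans hτ)
      rw [e1, e2]
  exact ⟨fun τ => (key τ).1, fun τ => (key τ).2⟩

lemma gup_bot {M : ℕ} (f : X → U → W → X) (l : X → U → W → ℝ) (ξ : Y → Fin M → X)
    (v y : Y) (u : U) (i : Fin M) :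
    gup f l ξ (fun _ => (⊥ : EReal)) v y u i = ⊥ := by
  rw [gup, eq_bot_iff]
  refine sSup_le ?_
  rintro c ⟨j, w, -, rfl⟩
  simp [EReal.add_bot]

lemma Vseq_bot {M : ℕ} [Nonempty U] [Nonempty Y]
    (f : X → U → W → X) (l : X → U → W → ℝ) (ξ : Y → Fin M → X) :
    ∀ (k : ℕ) (y : Y), Vseq f l ξ k (fun _ => (⊥ : EReal)) y = ⊥ := by
  intro k
  induction k with
  | zero =>
    intro y
    show (⨆ _ : Fin M, (⊥ : EReal)) = ⊥
    simp
  | succ k ih =>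
    intro y
    show (⨅ u : U, ⨆ v : Y, Vseq f l ξ k (gup f l ξ (fun _ => ⊥) v y u) v) = ⊥
    have : ∀ (u : U) (v : Y), Vseq f l ξ k (gup f l ξ (fun _ => ⊥) v y u) v = ⊥ := by
      intro u v
      have hg : gup f l ξ (fun _ => (⊥ : EReal)) v y u = fun _ => ⊥ :=
        funext fun i => gup_bot f l ξ v y u i
      rw [hg, ih]
    simp only [this, iSup_bot]
    exact iInf_const

end AuxLemmas3
section MainLemmas

variable {X U W Y : Type*}

lemma lower_bound {M : ℕ} [Nonempty X] [Nonempty U] [Nonempty W] [Nonempty Y]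
    (f : X → U → W → X) (h : X → Y) (hsurj : Function.Surjective h)
    (l : X → U → W → ℝ) (ξ : Y → Fin M → X)
    (pos : ∀ (x : X) (u : U), (0 : EReal) ≤ ⨆ w : W, (l x u w : EReal))
    (hξ : ∀ y : Y, Set.range (ξ y) = {x : X | h x = y})
    (π : ℕ → List Y → List U → U) (y0 : Y) :
    (⨆ k : ℕ, Vseq f l ξ k 0 y0) ≤ ⨆ N : ℕ, Jcost f h l π N y0 := by
  -- zero is a lower bound on the optimal cost
  have h0J : (0 : EReal) ≤ ⨆ N : ℕ, Jcost f h l π N y0 := by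
    obtain ⟨x0, hx0⟩ := hsurj y0
    refine le_trans ?_ (le_iSup (fun N => Jcost f h l π N y0) 0)
    have hel : ∀ w : W, ((l x0 (π 0 [h x0] []) w : ℝ) : EReal)
        ∈ { c : EReal | ∃ (x0' : X) (ws' : ℕ → W), h x0' = y0 ∧
            c = ((∑ t ∈ Finset.range (0 + 1),
              l (cstate f h π x0' ws' t) (cinput f h π x0' ws' t) (ws' t) : ℝ) : EReal) } := by
      intro w
      exact ⟨x0, fun _ => w, hx0, by simp [cstate, cinput, loop]⟩
    calc (0 : EReal) ≤ ⨆ w : W, ((l x0 (π 0 [h x0] []) w : ℝ) : EReal) := pos x0 _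
      _ ≤ Jcost f h l π 0 y0 := by
          rw [Jcost]
          exact iSup_le fun w => le_sSup (hel w)
  -- main induction on k
  have main : ∀ k : ℕ, ∀ (t : ℕ) (x0 : X) (ws : ℕ → W), h x0 = y0 →
      Vseq f l ξ k
        (rvec f l ξ (fun τ => h (cstate f h π x0 ws τ)) (cinput f h π x0 ws) t)
        (h (cstate f h π x0 ws t))
      ≤ ⨆ N : ℕ, Jcost f h l π N y0 := by
    intro k
    induction k with
    | zero =>
      intro t x0 ws hx0
      show (⨆ i, rvec f l ξ (fun τ => h (cstate f h π x0 ws τ)) (cinput f h π x0 ws) t i) ≤ _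
      refine iSup_le fun i => ?_
      rw [rvec_eq_rho f h l ξ hξ _ _ t i, rho]
      refine sSup_le ?_
      rintro c ⟨xs', ws', hend, hdyn, hmeas, rfl⟩
      cases t with
      | zero => simpa using h0J
      | succ s =>
        obtain ⟨hst, hin⟩ := loop_match f h π x0 (xs' 0) ws ws' (s + 1) xs' rfl hdyn hmeas
        refine le_trans (le_sSup ?_) (le_iSup (fun N => Jcost f h l π N y0) s)
        refine ⟨xs' 0, ws', hmeas 0 (Nat.succ_pos s) ▸ hx0 ▸ rfl, ?_⟩
        congr 1
        refine Finset.sum_congr rfl fun τ hτ => ?_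
        have hτ' : τ < s + 1 := Finset.mem_range.1 hτ
        rw [hst τ (le_of_lt hτ'), hin τ hτ']
    | succ k IH =>
      intro t x0 ws hx0
      show Bop f l ξ (Vseq f l ξ k)
        (rvec f l ξ (fun τ => h (cstate f h π x0 ws τ)) (cinput f h π x0 ws) t)
        (h (cstate f h π x0 ws t)) ≤ _
      rw [Bop]
      refine le_trans (iInf_le _ (cinput f h π x0 ws t)) ?_
      rw [Bu]
      refine iSup_le fun v => ?_
      set ys : ℕ → Y := fun τ => h (cstate f h π x0 ws τ) with hys
      set us : ℕ → U := cinput f h π x0 ws with hus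
      set r : Fin M → EReal := rvec f l ξ ys us t with hr
      by_cases hall : ∀ i, gup f l ξ r v (ys t) (us t) i = ⊥
      · have hg : gup f l ξ r v (ys t) (us t) = fun _ => ⊥ := funext hall
        rw [hg, Vseq_bot]
        exact bot_le
      · push_neg at hall
        obtain ⟨i0, hi0⟩ := hall
        -- extract a non-bottom element of the defining set of `gup ... i0`
        have hex : ∃ c ∈ { c : EReal | ∃ (j : Fin M) (w : W),
            ξ v i0 = f (ξ (ys t) j) (us t) w
              ∧ c = (l (ξ (ys t) j) (us t) w : EReal) + r j }, c ≠ ⊥ := by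
          by_contra hcon
          push_neg at hcon
          exact hi0 (le_bot_iff.1 (sSup_le fun c hc => (hcon c hc).le))
        obtain ⟨c, ⟨j, w, hfw, rfl⟩, hcne⟩ := hex
        have hrj : r j ≠ ⊥ := by
          intro hb
          exact hcne (by rw [hb, EReal.add_bot])
        rw [hr, rvec_eq_rho f h l ξ hξ _ _ t j, rho] at hrj
        have hSne : { c : EReal | ∃ (xs : ℕ → X) (ws'' : ℕ → W),
            xs t = ξ (ys t) j ∧ (∀ τ < t, xs (τ + 1) = f (xs τ) (us τ) (ws'' τ)) ∧
            (∀ τ < t, h (xs τ) = ys τ) ∧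
            c = ((∑ τ ∈ Finset.range t, l (xs τ) (us τ) (ws'' τ) : ℝ) : EReal) }.Nonempty := by
          by_contra hcon
          rw [Set.not_nonempty_iff_eq_empty] at hcon
          exact hrj (by rw [hcon, sSup_empty])
        obtain ⟨c', xs', ws'', hend, hdyn, hmeas, -⟩ := hSne
        -- build the extended trajectory
        set xs3 : ℕ → X := fun τ => if τ = t + 1 then ξ v i0 else xs' τ with hxs3
        set ws3 : ℕ → W := Function.update ws'' t w with hws3
        have hdyn3 : ∀ τ < t + 1, xs3 (τ + 1) = f (xs3 τ) (us τ) (ws3 τ) := by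
          intro τ hτ
          rcases Nat.lt_succ_iff_lt_or_eq.1 hτ with hτ' | rfl
          · have h1 : τ + 1 ≠ t + 1 := by omega
            have h2 : τ ≠ t + 1 := by omega
            have h3 : τ ≠ t := by omega
            simp only [hxs3, hws3, h1, h2, if_false, Function.update_of_ne h3]
            exact hdyn τ hτ'
          · have h2 : τ ≠ τ + 1 := by omega
            simp only [hxs3, hws3, if_pos rfl, h2, if_false, Function.update_self]
            simp [hfw, hend]
        have hmeas3 : ∀ τ < t + 1, h (xs3 τ) = h (cstate f h π x0 ws τ) := by
          intro τ hτ
          rcases Nat.lt_succ_iff_lt_or_eq.1 hτ with hτ' | rfl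
          · have h2 : τ ≠ t + 1 := by omega
            simp only [hxs3, h2, if_false]
            exact hmeas τ hτ'
          · have h2 : τ ≠ τ + 1 := by omega
            simp only [hxs3, h2, if_false]
            rw [hend, h_xi hξ]
        obtain ⟨hst, hin⟩ := loop_match f h π x0 (xs3 0) ws ws3 (t + 1) xs3 rfl hdyn3 hmeas3
        have h00 : h (xs3 0) = y0 := by
          rw [hmeas3 0 (Nat.succ_pos t)]
          exact hx0
        have hIH := IH (t + 1) (xs3 0) ws3 h00
        -- identify the information state and measurement at time t+1
        have hyeq : ∀ τ ≤ t, h (cstate f h π (xs3 0) ws3 τ) = ys τ := by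
          intro τ hτ
          rw [hst τ (le_of_lt (Nat.lt_succ_of_le hτ))]
          exact hmeas3 τ (Nat.lt_succ_of_le hτ)
        have hueq : ∀ τ < t + 1, cinput f h π (xs3 0) ws3 τ = us τ := hin
        have hy1 : h (cstate f h π (xs3 0) ws3 (t + 1)) = v := by
          rw [hst (t + 1) le_rfl]
          show h (if t + 1 = t + 1 then ξ v i0 else xs' (t + 1)) = v
          rw [if_pos rfl, h_xi hξ]
        have hrvec : rvec f l ξ (fun τ => h (cstate f h π (xs3 0) ws3 τ))
            (cinput f h π (xs3 0) ws3) (t + 1) = gup f l ξ r v (ys t) (us t) := by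
          show gup f l ξ
            (rvec f l ξ (fun τ => h (cstate f h π (xs3 0) ws3 τ)) (cinput f h π (xs3 0) ws3) t)
            (h (cstate f h π (xs3 0) ws3 (t + 1))) (h (cstate f h π (xs3 0) ws3 t))
            (cinput f h π (xs3 0) ws3 t) = _
          rw [hy1, hyeq t le_rfl, hueq t (Nat.lt_succ_self t),
            rvec_congr f l ξ t (fun τ hτ => hyeq τ hτ) (fun τ hτ => hueq τ (hτ.trans (Nat.lt_succ_self t)))]
        rw [hrvec, hy1] at hIH
        exact hIH
  -- conclude
  obtain ⟨x0, hx0⟩ := hsurj y0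
  refine iSup_le fun k => ?_
  have := main k 0 x0 (fun _ => Classical.arbitrary W) hx0
  show Vseq f l ξ k 0 y0 ≤ _
  have hys0 : h (cstate f h π x0 (fun _ => Classical.arbitrary W) 0) = y0 := hx0
  rw [hys0] at this
  exact this

end MainLemmas
section UpperLemma

variable {X U W Y : Type*}

lemma upper_bound {M : ℕ} [Nonempty X] [Nonempty U] [Nonempty W] [Nonempty Y]
    (f : X → U → W → X) (h : X → Y)
    (l : X → U → W → ℝ) (ξ : Y → Fin M → X)
    (hξ : ∀ y : Y, Set.range (ξ y) = {x : X | h x = y})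
    (η : (Fin M → EReal) → Y → U)
    (hη : ∀ (r : Fin M → EReal), (∀ i, r i ≠ ⊤) → ∀ y : Y,
      Bu f l ξ (fun r' y' => ⨆ k : ℕ, Vseq f l ξ k r' y') (η r y) r y
        = ⨆ k : ℕ, Vseq f l ξ k r y) (y0 : Y) :
    (⨆ N : ℕ, Jcost f h l (infoStrategy f l ξ η) N y0) ≤ ⨆ k : ℕ, Vseq f l ξ k 0 y0 := by
  set π := infoStrategy f l ξ η with hπ
  refine iSup_le fun N => ?_
  rw [Jcost]
  refine sSup_le ?_
  rintro c ⟨x0, ws, hx0, rfl⟩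
  set ys : ℕ → Y := fun τ => h (cstate f h π x0 ws τ) with hys
  set us : ℕ → U := cinput f h π x0 ws with hus
  -- descent along the closed loop
  have descent : ∀ t : ℕ,
      (⨆ k : ℕ, Vseq f l ξ k (rvec f l ξ ys us t) (ys t)) ≤ ⨆ k : ℕ, Vseq f l ξ k 0 y0 := by
    intro t
    induction t with
    | zero =>
      have : ys 0 = y0 := hx0
      rw [this]
      exact le_rfl
    | succ t ih =>
      by_cases htop : ∀ i, rvec f l ξ ys us t i ≠ ⊤
      · have hstep := hη (rvec f l ξ ys us t) htop (ys t)
        have huη : us t = η (rvec f l ξ ys us t) (ys t) := by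
          rw [hus, hπ]
          exact cinput_infoStrategy f h l ξ η x0 ws t
        calc (⨆ k : ℕ, Vseq f l ξ k (rvec f l ξ ys us (t + 1)) (ys (t + 1)))
            = ⨆ k : ℕ, Vseq f l ξ k
                (gup f l ξ (rvec f l ξ ys us t) (ys (t + 1)) (ys t)
                  (η (rvec f l ξ ys us t) (ys t))) (ys (t + 1)) := by rw [← huη]; rfl
          _ ≤ ⨆ v : Y, ⨆ k : ℕ, Vseq f l ξ k
                (gup f l ξ (rvec f l ξ ys us t) v (ys t)
                  (η (rvec f l ξ ys us t) (ys t))) v :=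
              le_iSup (fun v => ⨆ k : ℕ, Vseq f l ξ k
                (gup f l ξ (rvec f l ξ ys us t) v (ys t)
                  (η (rvec f l ξ ys us t) (ys t))) v) (ys (t + 1))
          _ = ⨆ k : ℕ, Vseq f l ξ k (rvec f l ξ ys us t) (ys t) := hstep
          _ ≤ ⨆ k : ℕ, Vseq f l ξ k 0 y0 := ih
      · push_neg at htop
        obtain ⟨i, hi⟩ := htop
        have htopv : (⨆ k : ℕ, Vseq f l ξ k 0 y0) = ⊤ := by
          refine top_le_iff.1 ?_
          refine le_trans ?_ ih
          refine le_trans ?_ (le_iSup (fun k => Vseq f l ξ k (rvec f l ξ ys us t) (ys t)) 0)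
          show ⊤ ≤ ⨆ i', rvec f l ξ ys us t i'
          rw [← hi]
          exact le_iSup (rvec f l ξ ys us t) i
        rw [htopv]
        exact le_top
  -- the realized cost is dominated by the information state at time N+1
  have hmeasN : h (cstate f h π x0 ws (N + 1)) = ys (N + 1) := rfl
  obtain ⟨i, hi⟩ := exists_xi hξ hmeasN
  have hsum : ((∑ t ∈ Finset.range (N + 1),
        l (cstate f h π x0 ws t) (cinput f h π x0 ws t) (ws t) : ℝ) : EReal)
      ≤ rvec f l ξ ys us (N + 1) i := by
    rw [rvec_eq_rho f h l ξ hξ _ _ (N + 1) i, rho]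
    refine le_sSup ⟨fun τ => cstate f h π x0 ws τ, ws, hi.symm, ?_, ?_, rfl⟩
    · intro τ _
      exact cstate_succ f h π x0 ws τ
    · intro τ _
      rfl
  calc ((∑ t ∈ Finset.range (N + 1),
        l (cstate f h π x0 ws t) (cinput f h π x0 ws t) (ws t) : ℝ) : EReal)
      ≤ rvec f l ξ ys us (N + 1) i := hsum
    _ ≤ ⨆ i', rvec f l ξ ys us (N + 1) i' := le_iSup (rvec f l ξ ys us (N + 1)) i
    _ ≤ ⨆ k : ℕ, Vseq f l ξ k (rvec f l ξ ys us (N + 1)) (ys (N + 1)) :=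
        le_iSup (fun k => Vseq f l ξ k (rvec f l ξ ys us (N + 1)) (ys (N + 1))) 0
    _ ≤ ⨆ k : ℕ, Vseq f l ξ k 0 y0 := descent (N + 1)

end UpperLemma


/-- Under the positivity and finite-preimage assumptions, suppose the
value-iteration sequence is pointwise bounded, with pointwise limit
`V_⋆(r, y) = sup_k V_k(r, y)`, and suppose `η_⋆` is a minimizing argument of the Bellman
operator applied to `V_⋆`, i.e. `B_{η_⋆(r,y)} V_⋆(r, y) = V_⋆(r, y)`. Then the
information-state feedback policy `μ_t(y_{0:t}, u_{0:t-1}) = η_⋆(r_t, y_t)` (with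
`r_0 = 0`, `r_{t+1} = g(r_t, y_{t+1}, y_t, u_t)`) is optimal:
`sup_N J_{μ}^N(y_0) = J_⋆(y_0) = inf_π sup_N J_π^N(y_0)` for every `y_0`. -/
theorem info_state_policy_optimal {X U W Y : Type*} [Nonempty X] [Nonempty U]
    [Nonempty W] [Nonempty Y] {M : ℕ} (f : X → U → W → X) (h : X → Y)
    (hsurj : Function.Surjective h) (l : X → U → W → ℝ) (ξ : Y → Fin M → X)
    (pos : ∀ (x : X) (u : U), (0 : EReal) ≤ ⨆ w : W, (l x u w : EReal))
    (hξ : ∀ y : Y, Set.range (ξ y) = {x : X | h x = y})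
    (hbdd : ∀ (r : Fin M → EReal), (∀ i, r i ≠ ⊤) → ∀ y : Y,
      (⨆ k : ℕ, Vseq f l ξ k r y) < ⊤)
    (η : (Fin M → EReal) → Y → U)
    (hη : ∀ (r : Fin M → EReal), (∀ i, r i ≠ ⊤) → ∀ y : Y,
      Bu f l ξ (fun r' y' => ⨆ k : ℕ, Vseq f l ξ k r' y') (η r y) r y
        = ⨆ k : ℕ, Vseq f l ξ k r y) :
    ∀ y0 : Y,
      (⨆ N : ℕ, Jcost f h l (infoStrategy f l ξ η) N y0)
        = ⨅ π : ℕ → List Y → List U → U, ⨆ N : ℕ, Jcost f h l π N y0 := by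
  intro y0
  apply le_antisymm
  · refine le_iInf fun π => ?_
    exact le_trans (upper_bound f h l ξ hξ η hη y0)
      (lower_bound f h hsurj l ξ pos hξ π y0)
  · exact iInf_le _ (infoStrategy f l ξ η)
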